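/- arXiv:2505.21719 — 3 statements merged into one kernel-verified Lean document; each statement's English description precedes it below -/
import Mathlib

section
/- Let K = ℚ(q) be the field of rational functions in one variable q over ℚ. Define log_χ(T) = Σ_{k≥1} ([k]_q / k)·T^k ∈ K⟦T⟧, where [k]_q = 1 + q + ⋯ + q^{k-1}, and define exp_χ(T) = (E(T) - 1)·(E(T) - q)^{-1} ∈ K⟦T⟧, where E(T) = exp((1-q)·T) is the formal exponential power series exp evaluated by substituting (1-q)·T (note E(T) - q has constant term 1 - q ≠ 0, hence is invertible in K⟦T⟧). Then exp_χ and log_χ are mutually inverse under composition: exp_χ(log_χ(T)) = T and log_χ(exp_χ(T)) = T in K⟦T⟧. (Both series have zero constant term and linear coefficient 1, so the compositions are defined.) -/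
open PowerSeries

noncomputable section

/-- The field `K = ℚ(q)` of rational functions. -/
abbrev K : Type := RatFunc ℚ

/-- The variable `q ∈ ℚ(q)`. -/
noncomputable def q : K := RatFunc.X

/-- Composition `f(g(T))` of formal power series, which agrees with the usual
substitution of `g` into `f` whenever `g` has zero constant term: the
coefficient of `T^n` in `f(g)` only involves `f_k • g^k` for `k ≤ n`. -/
noncomputable def comp (f g : PowerSeries K) : PowerSeries K :=
  PowerSeries.mk fun n =>
    PowerSeries.coeff n
      (∑ k ∈ Finset.range (n + 1), PowerSeries.C (PowerSeries.coeff k f) * g ^ k)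

/-- `log_χ(T) = Σ_{k ≥ 1} ([k]_q / k) T^k`, where `[k]_q = 1 + q + ⋯ + q^{k-1}`. -/
noncomputable def logChi : PowerSeries K :=
  PowerSeries.mk fun k => (∑ i ∈ Finset.range k, q ^ i) / (k : K)

/-- `E(T) = exp((1-q)·T)`, the formal exponential rescaled by `1 - q`. -/
noncomputable def E : PowerSeries K := PowerSeries.rescale (1 - q) (PowerSeries.exp K)

/-- `exp_χ(T) = (E(T) - 1) · (E(T) - q)⁻¹`, where `E(T) - q` has constant term
`1 - q ≠ 0` and hence is invertible in `K⟦T⟧`. -/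
noncomputable def expChi : PowerSeries K := (E - 1) * (E - PowerSeries.C q)⁻¹

section Aux
open Finset

-- basic coefficient facts
lemma coeff_pow_eq_zero {g : PowerSeries K} (hg : constantCoeff g = 0)
    {n k : ℕ} (h : n < k) : coeff n (g ^ k) = 0 := by
  induction k generalizing n with
  | zero => omega
  | succ k ih =>
    rw [pow_succ, coeff_mul]
    refine Finset.sum_eq_zero fun p hp => ?_
    rw [Finset.HasAntidiagonal.mem_antidiagonal] at hp
    rcases lt_or_ge p.1 k with h1 | h1
    · rw [ih h1, zero_mul]
    · have : p.2 = 0 := by omega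
      have hp1 : p.1 < k + 1 := by omega
      have : p.1 = n := by omega
      rw [‹p.2 = 0›, coeff_zero_eq_constantCoeff, hg, mul_zero]

lemma coeff_comp (f g : PowerSeries K) (n : ℕ) :
    coeff n (comp f g) = ∑ k ∈ range (n + 1), coeff k f * coeff n (g ^ k) := by
  simp [comp, coeff_mk, map_sum, coeff_C_mul]

lemma coeff_comp_stable {g : PowerSeries K} (hg : constantCoeff g = 0)
    (f : PowerSeries K) {n m : ℕ} (h : n < m) :
    coeff n (comp f g) = ∑ k ∈ range m, coeff k f * coeff n (g ^ k) := by
  rw [coeff_comp]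
  refine Finset.sum_subset (by intro x hx; simp only [mem_range] at *; omega) ?_
  intro k hk hk'
  simp only [mem_range] at hk hk'
  rw [coeff_pow_eq_zero hg (by omega), mul_zero]

lemma constantCoeff_comp {g : PowerSeries K} (hg : constantCoeff g = 0)
    (f : PowerSeries K) : constantCoeff (comp f g) = constantCoeff f := by
  rw [← coeff_zero_eq_constantCoeff, coeff_comp]
  simp

lemma comp_C (a : K) (g : PowerSeries K) : comp (C a) g = C a := by
  ext n
  rw [coeff_comp]
  rw [Finset.sum_eq_single 0]
  · simp [coeff_C]
  · intro k hk hk0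
    rw [coeff_C, if_neg hk0, zero_mul]
  · simp

lemma comp_one (g : PowerSeries K) : comp 1 g = 1 := by
  simpa using comp_C 1 g

lemma comp_add (f h g : PowerSeries K) : comp (f + h) g = comp f g + comp h g := by
  ext n
  simp [coeff_comp, add_mul, Finset.sum_add_distrib]

lemma comp_sub (f h g : PowerSeries K) : comp (f - h) g = comp f g - comp h g := by
  ext n
  simp [coeff_comp, sub_mul, Finset.sum_sub_distrib]

lemma comp_C_mul (a : K) (f g : PowerSeries K) :
    comp (C a * f) g = C a * comp f g := by
  ext n
  simp [coeff_comp, coeff_C_mul, Finset.mul_sum, mul_assoc]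

lemma comp_X {g : PowerSeries K} (hg : constantCoeff g = 0) : comp X g = g := by
  ext n
  rw [coeff_comp]
  rw [Finset.sum_eq_single 1]
  · cases n with
    | zero => simp [hg]
    | succ m => simp
  · intro k hk hk1
    rw [coeff_X, if_neg hk1, zero_mul]
  · intro h
    simp only [mem_range, not_lt] at h
    have hn : n = 0 := by omega
    subst hn
    simp [hg]

lemma coeff_mul_congr {A A' B : PowerSeries K} {n : ℕ}
    (h : ∀ i ≤ n, coeff i A = coeff i A') :
    coeff n (A * B) = coeff n (A' * B) := by
  rw [coeff_mul, coeff_mul]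
  refine Finset.sum_congr rfl fun p hp => ?_
  rw [Finset.HasAntidiagonal.mem_antidiagonal] at hp
  rw [h p.1 (by omega)]

lemma coeff_sum_C_mul_pow (a : ℕ → K) (g : PowerSeries K) (m i : ℕ) :
    coeff i (∑ k ∈ range m, C (a k) * g ^ k)
      = ∑ k ∈ range m, a k * coeff i (g ^ k) := by
  simp [map_sum, coeff_C_mul]

lemma comp_mul {g : PowerSeries K} (hg : constantCoeff g = 0)
    (f h : PowerSeries K) : comp (f * h) g = comp f g * comp h g := by
  ext n
  set S : PowerSeries K := ∑ k ∈ range (n+1), C (coeff k f) * g ^ k with hS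
  set T : PowerSeries K := ∑ k ∈ range (n+1), C (coeff k h) * g ^ k with hT
  have hSf : ∀ i ≤ n, coeff i (comp f g) = coeff i S := fun i hi =>
    (coeff_comp_stable hg f (show i < n+1 by omega)).trans
      (coeff_sum_C_mul_pow (fun k => coeff k f) g (n+1) i).symm
  have hTh : ∀ i ≤ n, coeff i (comp h g) = coeff i T := fun i hi =>
    (coeff_comp_stable hg h (show i < n+1 by omega)).trans
      (coeff_sum_C_mul_pow (fun k => coeff k h) g (n+1) i).symm
  have hrhs : coeff n (comp f g * comp h g) = coeff n (S * T) :=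
    calc coeff n (comp f g * comp h g) = coeff n (S * comp h g) := coeff_mul_congr hSf
      _ = coeff n (comp h g * S) := by rw [mul_comm]
      _ = coeff n (T * S) := coeff_mul_congr hTh
      _ = coeff n (S * T) := by rw [mul_comm]
  rw [hrhs]
  -- Expand RHS as a sum over the square
  have hST : coeff n (S * T) =
      ∑ p ∈ range (n+1) ×ˢ range (n+1),
        coeff p.1 f * coeff p.2 h * coeff n (g ^ (p.1 + p.2)) := by
    rw [hS, hT, Finset.sum_mul_sum, Finset.sum_product, map_sum]
    refine Finset.sum_congr rfl fun k hk => ?_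
    rw [map_sum]
    refine Finset.sum_congr rfl fun l hl => ?_
    rw [show C (coeff k f) * g ^ k * (C (coeff l h) * g ^ l)
        = C (coeff k f) * (C (coeff l h) * g ^ (k + l)) by ring,
      coeff_C_mul, coeff_C_mul]
    ring
  rw [hST, coeff_comp]
  -- LHS: expand coeff of product, reindex over biUnion of antidiagonals
  have hL : ∑ m ∈ range (n+1), coeff m (f * h) * coeff n (g ^ m)
      = ∑ p ∈ (range (n+1)).biUnion (fun m => Finset.HasAntidiagonal.antidiagonal m),
          coeff p.1 f * coeff p.2 h * coeff n (g ^ (p.1 + p.2)) := by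
    rw [Finset.sum_biUnion]
    · refine Finset.sum_congr rfl fun m hm => ?_
      rw [coeff_mul, Finset.sum_mul]
      refine Finset.sum_congr rfl fun p hp => ?_
      rw [Finset.HasAntidiagonal.mem_antidiagonal] at hp
      rw [hp]
    · intro x hx y hy hxy
      simp only [Finset.disjoint_left]
      intro p hpx hpy
      rw [Finset.HasAntidiagonal.mem_antidiagonal] at hpx hpy
      exact hxy (hpx ▸ hpy ▸ rfl)
  rw [hL]
  refine Finset.sum_subset ?_ ?_
  · intro p hp
    simp only [Finset.mem_biUnion, mem_range] at hp
    obtain ⟨m, hm, hpm⟩ := hp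
    rw [Finset.HasAntidiagonal.mem_antidiagonal] at hpm
    simp only [Finset.mem_product, mem_range]
    omega
  · intro p hp hnp
    simp only [Finset.mem_product, mem_range] at hp
    have : n < p.1 + p.2 := by
      by_contra hc
      push_neg at hc
      exact hnp (Finset.mem_biUnion.mpr ⟨p.1 + p.2, mem_range.mpr (by omega),
        Finset.HasAntidiagonal.mem_antidiagonal.mpr rfl⟩)
    rw [coeff_pow_eq_zero hg this, mul_zero]

lemma comp_inv {g : PowerSeries K} (hg : constantCoeff g = 0)
    (f : PowerSeries K) (hf : constantCoeff f ≠ 0) :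
    comp f⁻¹ g = (comp f g)⁻¹ := by
  have hc : constantCoeff (comp f g) ≠ 0 := by rw [constantCoeff_comp hg]; exact hf
  rw [PowerSeries.eq_inv_iff_mul_eq_one hc, ← comp_mul hg, PowerSeries.inv_mul_cancel f hf,
    comp_one]

open scoped Classical in
lemma comp_deriv {g : PowerSeries K} (hg : constantCoeff g = 0)
    (f : PowerSeries K) :
    d⁄dX K (comp f g) = comp (d⁄dX K f) g * d⁄dX K g := by
  ext n
  rw [coeff_derivative, coeff_comp_stable hg f (show n+1 < n+2 by omega)]
  have hlhs : (∑ k ∈ range (n+2), coeff k f * coeff (n+1) (g ^ k)) * (n+1)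
      = ∑ k ∈ range (n+2), coeff k f * coeff n (d⁄dX K (g ^ k)) := by
    rw [Finset.sum_mul]
    refine Finset.sum_congr rfl fun k hk => ?_
    rw [coeff_derivative, mul_assoc]
  rw [hlhs]
  have hdpow : ∀ k : ℕ, d⁄dX K (g ^ (k+1)) = (k+1) • (g ^ k * d⁄dX K g) := by
    intro k
    have := Derivation.leibniz_pow (d⁄dX K) g (n := k+1)
    simpa using this
  rw [Finset.sum_range_succ' (fun k => coeff k f * coeff n (d⁄dX K (g ^ k))) (n+1)]
  have h0 : coeff 0 f * coeff n (d⁄dX K (g ^ 0)) = 0 := by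
    simp
  rw [h0, add_zero]
  set S' : PowerSeries K := ∑ k ∈ range (n+1), C (coeff k (d⁄dX K f)) * g ^ k with hS'
  have hSd : ∀ i ≤ n, coeff i (comp (d⁄dX K f) g) = coeff i S' := fun i hi =>
    (coeff_comp_stable hg _ (show i < n+1 by omega)).trans
      (coeff_sum_C_mul_pow (fun k => coeff k (d⁄dX K f)) g (n+1) i).symm
  have hrhs : coeff n (comp (d⁄dX K f) g * d⁄dX K g)
      = ∑ k ∈ range (n+1), coeff (k+1) f * ((k+1 : K) * coeff n (g ^ k * d⁄dX K g)) := by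
    rw [coeff_mul_congr hSd, hS', Finset.sum_mul, map_sum]
    refine Finset.sum_congr rfl fun k hk => ?_
    rw [mul_assoc, coeff_C_mul, coeff_derivative]
    push_cast
    ring
  rw [hrhs]
  refine Finset.sum_congr rfl fun k hk => ?_
  rw [hdpow k, map_nsmul, nsmul_eq_mul]
  push_cast
  ring

lemma coeff_E (n : ℕ) : coeff n E = (1-q)^n * (1/(Nat.factorial n : K)) := by
  rw [E, coeff_rescale, coeff_exp, map_div₀, map_one, map_natCast]

instance : CharZero K := charZero_of_injective_algebraMap (algebraMap ℚ K).injective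


lemma q_ne_one : q ≠ 1 := by
  intro h
  have := congrArg (RatFunc.eval (RingHom.id ℚ) 0) h
  rw [q] at this
  rw [RatFunc.eval_X, RatFunc.eval_one] at this
  exact zero_ne_one this

lemma one_sub_q_ne : (1 : K) - q ≠ 0 := sub_ne_zero.mpr (Ne.symm q_ne_one)

noncomputable def dL : PowerSeries K := PowerSeries.mk fun n => ∑ i ∈ Finset.range (n+1), q ^ i

lemma constantCoeff_logChi : constantCoeff logChi = 0 := by
  rw [← coeff_zero_eq_constantCoeff, logChi, coeff_mk]
  simp

lemma deriv_logChi : d⁄dX K logChi = dL := by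
  ext n
  rw [coeff_derivative, logChi, coeff_mk, dL, coeff_mk]
  have h : ((n : K) + 1) ≠ 0 := by
    have : ((n+1 : ℕ) : K) ≠ 0 := Nat.cast_ne_zero.mpr (Nat.succ_ne_zero n)
    push_cast at this
    exact this
  rw [show ((n+1 : ℕ) : K) = (n : K) + 1 by push_cast; ring]
  field_simp

lemma geom (r : K) : (PowerSeries.mk fun n => r ^ n) * (1 - C r * X) = 1 := by
  ext n
  rw [mul_sub, mul_one, map_sub,
    show (PowerSeries.mk fun n => r ^ n) * (C r * X) = C r * ((PowerSeries.mk fun n => r ^ n) * X) by ring,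
    coeff_C_mul]
  cases n with
  | zero => simp
  | succ m => simp [coeff_succ_mul_X, coeff_mk, pow_succ, coeff_one, mul_comm]

lemma dL_one_sub : dL * (1 - X) = PowerSeries.mk fun n => q ^ n := by
  ext n
  rw [mul_sub, mul_one, map_sub]
  cases n with
  | zero => simp [dL]
  | succ m => simp [dL, coeff_succ_mul_X, coeff_mk, Finset.sum_range_succ]

lemma dL_P : dL * ((1 - X) * (1 - C q * X)) = 1 := by
  rw [← mul_assoc, dL_one_sub, geom]


lemma constantCoeff_E : constantCoeff E = 1 := by
  rw [← coeff_zero_eq_constantCoeff, coeff_E]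
  simp

lemma deriv_E : d⁄dX K E = C (1-q) * E := by
  ext n
  rw [coeff_derivative, coeff_C_mul, coeff_E, coeff_E]
  have h1 : (1/(Nat.factorial (n+1) : K)) * ((n:K)+1) = 1/(Nat.factorial n : K) := by
    have h2 : ((Nat.factorial n : ℕ) : K) ≠ 0 := Nat.cast_ne_zero.mpr (Nat.factorial_ne_zero n)
    have h3 : ((n:K)+1) ≠ 0 := by
      have : ((n+1 : ℕ) : K) ≠ 0 := Nat.cast_ne_zero.mpr (Nat.succ_ne_zero n)
      push_cast at this
      exact this
    rw [Nat.factorial_succ]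
    push_cast
    field_simp
  linear_combination ((1-q)^(n+1)) * h1

lemma constantCoeff_E_sub_Cq : constantCoeff (E - C q) = 1 - q := by
  rw [map_sub, constantCoeff_E, constantCoeff_C]

lemma E_sub_Cq_ne : constantCoeff (E - C q) ≠ 0 := by
  rw [constantCoeff_E_sub_Cq]; exact one_sub_q_ne

lemma constantCoeff_expChi : constantCoeff expChi = 0 := by
  rw [expChi, map_mul, map_sub, constantCoeff_E, map_one, sub_self, zero_mul]

lemma expChi_mul : expChi * (E - C q) = E - 1 := by
  rw [expChi, mul_assoc, PowerSeries.inv_mul_cancel _ E_sub_Cq_ne, mul_one]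

lemma hB : E * (1 - expChi) = 1 - C q * expChi := by
  linear_combination -expChi_mul

lemma hC : (1 - expChi) * (E - C q) = 1 - C q := by
  linear_combination hB

lemma hCq : C (1-q) = 1 - C q := by rw [map_sub, map_one]

lemma E_sub_Cq_ne_zero : E - C q ≠ 0 := by
  intro h
  apply one_sub_q_ne
  rw [← constantCoeff_E_sub_Cq, h, map_zero]

lemma deriv_expChi : d⁄dX K expChi = (1 - expChi) * (1 - C q * expChi) := by
  have hd := congrArg (d⁄dX K) expChi_mul
  rw [Derivation.leibniz, map_sub, map_sub, derivative_C, Derivation.map_one_eq_zero,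
    smul_eq_mul, smul_eq_mul, deriv_E, sub_zero] at hd
  -- hd : expChi * (C (1-q) * E) + (E - C q) * d expChi = C (1-q) * E
  have hA : (E - C q) * d⁄dX K expChi = (1 - C q) * (E * (1 - expChi)) := by
    rw [← hCq]
    linear_combination hd
  apply mul_left_cancel₀ E_sub_Cq_ne_zero
  linear_combination hA + (1 - C q) * hB - (1 - C q * expChi) * hC

lemma part2 : comp logChi expChi = X := by
  have hs0 := constantCoeff_expChi
  have h1 : comp dL expChi * ((1 - expChi) * (1 - C q * expChi)) = 1 := by
    have := congrArg (fun f => comp f expChi) dL_P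
    simpa only [comp_mul hs0, comp_sub, comp_one, comp_X hs0, comp_C_mul, comp_C] using this
  apply derivative.ext
  · rw [comp_deriv hs0, deriv_logChi, deriv_expChi, derivative_X, h1]
  · rw [constantCoeff_comp hs0, constantCoeff_logChi, constantCoeff_X]

lemma F_mul_one_sub_X : comp E logChi * (1 - X) = 1 - C q * X := by
  have hgl := constantCoeff_logChi
  set F : PowerSeries K := comp E logChi with hFdef
  have hF0 : constantCoeff F = 1 := (constantCoeff_comp hgl E).trans constantCoeff_E
  have hdF : d⁄dX K F * ((1 - X) * (1 - C q * X)) = (1 - C q) * F := by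
    rw [hFdef, comp_deriv hgl, deriv_E, comp_C_mul, deriv_logChi, hCq]
    calc (1 - C q) * comp E logChi * dL * ((1 - X) * (1 - C q * X))
        = (1 - C q) * comp E logChi * (dL * ((1 - X) * (1 - C q * X))) := by ring
      _ = (1 - C q) * comp E logChi := by rw [dL_P, mul_one]
  have hc1 : constantCoeff (1 - C q * X) ≠ 0 := by
    rw [map_sub, map_one, map_mul, constantCoeff_X, mul_zero, sub_zero]
    exact one_ne_zero
  set u : PowerSeries K := (1 - C q * X)⁻¹ with hudef
  have h3 : (1 - C q * X) * u = 1 := PowerSeries.mul_inv_cancel _ hc1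
  have hd1X : d⁄dX K ((1 : PowerSeries K) - X) = -1 := by
    rw [map_sub, derivative_X, Derivation.map_one_eq_zero]; ring
  have hd1 : d⁄dX K (F * (1 - X)) = (1 - X) * d⁄dX K F - F := by
    rw [Derivation.leibniz, hd1X, smul_eq_mul, smul_eq_mul]; ring
  have hdCqX : d⁄dX K ((1 : PowerSeries K) - C q * X) = -(C q) := by
    rw [map_sub, Derivation.map_one_eq_zero, Derivation.leibniz, derivative_X, derivative_C,
      smul_eq_mul, smul_eq_mul]
    ring
  have hdu : d⁄dX K u = C q * u ^ 2 := by
    rw [hudef, derivative_inv', hdCqX]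
    ring
  have hdH : d⁄dX K (F * (1 - X) * u)
      = ((1 - X) * d⁄dX K F - F) * u + (F * (1 - X)) * (C q * u ^ 2) := by
    rw [Derivation.leibniz, hdu, hd1, smul_eq_mul, smul_eq_mul]
    ring
  set W : PowerSeries K := (1 - X) * (1 - C q * X) ^ 2 with hWdef
  have hu1 : u * W = (1 - X) * (1 - C q * X) := by
    rw [hWdef]; linear_combination ((1 - X) * (1 - C q * X)) * h3
  have hu2 : u ^ 2 * W = 1 - X := by
    rw [hWdef]; linear_combination ((1 - X) * (1 - C q * X) * u + (1 - X)) * h3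
  have hzero : d⁄dX K (F * (1 - X) * u) * W = 0 := by
    linear_combination W * hdH + ((1 - X) * d⁄dX K F - F) * hu1
      + (F * (1 - X) * C q) * hu2 + (1 - X) * hdF
  have hW0 : W ≠ 0 := by
    intro h
    have : constantCoeff W = 1 := by
      simp [hWdef, constantCoeff_X]
    rw [h, map_zero] at this
    exact zero_ne_one this
  have hdH0 : d⁄dX K (F * (1 - X) * u) = 0 := by
    rcases mul_eq_zero.mp hzero with h | h
    · exact h
    · exact absurd h hW0
  have hH : F * (1 - X) * u = 1 := by
    apply derivative.ext
    · rw [hdH0, Derivation.map_one_eq_zero]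
    · simp [map_mul, hF0, constantCoeff_X, hudef, PowerSeries.constantCoeff_inv]
  calc F * (1 - X) = F * (1 - X) * (u * (1 - C q * X)) := by
        rw [mul_comm u, h3, mul_one]
    _ = (F * (1 - X) * u) * (1 - C q * X) := by ring
    _ = 1 - C q * X := by rw [hH, one_mul]

lemma part1 : comp expChi logChi = X := by
  have hgl := constantCoeff_logChi
  set F : PowerSeries K := comp E logChi with hFdef
  have hF0 : constantCoeff F = 1 := (constantCoeff_comp hgl E).trans constantCoeff_E
  have h1 : comp expChi logChi = (F - 1) * (F - C q)⁻¹ := by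
    rw [expChi, comp_mul hgl, comp_sub, comp_one, comp_inv hgl _ E_sub_Cq_ne, comp_sub, comp_C]
  have hFq : constantCoeff (F - C q) ≠ 0 := by
    rw [map_sub, hF0, constantCoeff_C]
    exact one_sub_q_ne
  rw [h1]
  symm
  rw [PowerSeries.eq_mul_inv_iff_mul_eq hFq]
  linear_combination -F_mul_one_sub_X


end Aux

/-- `exp_χ` and `log_χ` are mutually inverse for composition of formal power
series: `exp_χ(log_χ(T)) = T` and `log_χ(exp_χ(T)) = T`. -/
theorem stmt3 :
    comp expChi logChi = PowerSeries.X ∧ comp logChi expChi = PowerSeries.X :=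
  ⟨part1, part2⟩

end
end

section
/- Let R = ℤ[q] and work in the formal power series ring R⟦X,Y⟧ in two variables. The element 1 + q·X·Y has constant term 1, hence is a unit; define F_χ(X,Y) = (X + Y + (1+q)·X·Y) · (1 + q·X·Y)^{-1} ∈ R⟦X,Y⟧. Then F_χ is a commutative one-dimensional formal group law over R: (i) F_χ(X, 0) = X and F_χ(0, Y) = Y; (ii) F_χ(X, Y) = F_χ(Y, X); (iii) F_χ(F_χ(X,Y), Z) = F_χ(X, F_χ(Y,Z)) in R⟦X,Y,Z⟧. -/
noncomputable section

/-- Substitution of two power series `a, b` (with zero constant terms) for the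
two variables of a two-variable formal power series `F`: the coefficient of a
monomial `d` in `F(a,b)` only involves `F_{ij} · a^i · b^j` for
`i + j ≤ |d|` (the total degree of `d`), since `a^i b^j` has order `≥ i + j`. -/
noncomputable def subst2 {R : Type*} [CommRing R] {σ : Type*}
    (F : MvPowerSeries (Fin 2) R) (a b : MvPowerSeries σ R) : MvPowerSeries σ R :=
  fun d =>
    MvPowerSeries.coeff (R := R) d
      (∑ p ∈ Finset.range ((d.sum fun _ n => n) + 1) ×ˢ
          Finset.range ((d.sum fun _ n => n) + 1),
        MvPowerSeries.C (σ := σ) (R := R)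
            (MvPowerSeries.coeff (R := R) (Finsupp.single 0 p.1 + Finsupp.single 1 p.2) F) *
          a ^ p.1 * b ^ p.2)

/-- The formal group law
`F_χ(X,Y) = (X + Y + (1+q)·X·Y) · (1 + q·X·Y)⁻¹ ∈ ℤ[q]⟦X,Y⟧`,
where `1 + q·X·Y` has constant term `1` and is inverted by `invOfUnit`. -/
noncomputable def Fchi : MvPowerSeries (Fin 2) (Polynomial ℤ) :=
  letI q : Polynomial ℤ := Polynomial.X
  letI X : MvPowerSeries (Fin 2) (Polynomial ℤ) := MvPowerSeries.X 0
  letI Y : MvPowerSeries (Fin 2) (Polynomial ℤ) := MvPowerSeries.X 1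
  (X + Y + MvPowerSeries.C (σ := Fin 2) (R := Polynomial ℤ) (1 + q) * X * Y) *
    MvPowerSeries.invOfUnit (1 + MvPowerSeries.C (σ := Fin 2) (R := Polynomial ℤ) q * X * Y) 1

open MvPowerSeries Finset

namespace S2

variable {R : Type*} [CommRing R] {σ : Type*}

def deg {σ : Type*} (d : σ →₀ ℕ) : ℕ := d.sum fun _ n => n

lemma deg_add (u v : σ →₀ ℕ) : deg (u + v) = deg u + deg v :=
  Finsupp.sum_add_index' (fun _ => rfl) (fun _ _ _ => rfl)

lemma one_le_deg {u : σ →₀ ℕ} (h : u ≠ 0) : 1 ≤ deg u := by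
  obtain ⟨x, hx⟩ := Finsupp.ne_iff.mp h
  simp only [Finsupp.coe_zero, Pi.zero_apply] at hx
  calc 1 ≤ u x := Nat.one_le_iff_ne_zero.mpr hx
  _ ≤ deg u := Finset.single_le_sum (f := fun x => u x) (fun _ _ => Nat.zero_le _)
      (Finsupp.mem_support_iff.mpr hx)

lemma coeff_pow_eq_zero {a : MvPowerSeries σ R} (ha : constantCoeff (σ := σ) (R := R) a = 0) :
    ∀ {i : ℕ} {e : σ →₀ ℕ}, deg e < i → MvPowerSeries.coeff (R := R) e (a ^ i) = 0 := by
  classical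
  intro i
  induction i with
  | zero => intro e h; omega
  | succ n ih =>
    intro e h
    rw [pow_succ', coeff_mul]
    apply Finset.sum_eq_zero
    rintro ⟨u, v⟩ hm
    simp only [Finset.HasAntidiagonal.mem_antidiagonal] at hm
    simp only []
    by_cases hu : u = 0
    · subst hu
      simp [coeff_zero_eq_constantCoeff, ha]
    · have h1 : 1 ≤ deg u := one_le_deg hu
      have h2 : deg u + deg v = deg e := by rw [← deg_add, hm]
      rw [ih (by omega)]
      ring

lemma coeff_pow_mul_pow_eq_zero {a b : MvPowerSeries σ R}
    (ha : constantCoeff (σ := σ) (R := R) a = 0) (hb : constantCoeff (σ := σ) (R := R) b = 0)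
    {i j : ℕ} {d : σ →₀ ℕ} (h : deg d < i + j) :
    MvPowerSeries.coeff (R := R) d (a ^ i * b ^ j) = 0 := by
  classical
  rw [coeff_mul]
  apply Finset.sum_eq_zero
  rintro ⟨u, v⟩ hm
  rw [Finset.HasAntidiagonal.mem_antidiagonal] at hm
  have h2 : deg u + deg v = deg d := by rw [← deg_add, hm]
  rcases Nat.lt_or_ge (deg u) i with hu | hu
  · rw [coeff_pow_eq_zero ha hu]; ring
  · rw [coeff_pow_eq_zero hb (show deg v < j by omega)]; ring


def ee (p : ℕ × ℕ) : Fin 2 →₀ ℕ := Finsupp.single 0 p.1 + Finsupp.single 1 p.2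

lemma ee_apply0 (p : ℕ × ℕ) : ee p 0 = p.1 := by
  simp [ee, Finsupp.single_apply]

lemma ee_apply1 (p : ℕ × ℕ) : ee p 1 = p.2 := by
  simp [ee, Finsupp.single_apply]

lemma ee_eq (d : Fin 2 →₀ ℕ) : ee (d 0, d 1) = d := by
  refine Finsupp.ext fun x => ?_
  fin_cases x
  · simpa using ee_apply0 (d 0, d 1)
  · simpa using ee_apply1 (d 0, d 1)

lemma ee_add (p q : ℕ × ℕ) : ee (p + q) = ee p + ee q := by
  simp only [ee, Prod.fst_add, Prod.snd_add, Finsupp.single_add]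
  abel

lemma deg_single {σ : Type*} (x : σ) (n : ℕ) : deg (Finsupp.single x n) = n := by
  rcases eq_or_ne n 0 with h | h
  · simp [deg, h]
  · simp [deg, Finsupp.sum, Finsupp.support_single_ne_zero _ h]

lemma deg_ee (p : ℕ × ℕ) : deg (ee p) = p.1 + p.2 := by
  rw [ee, deg_add, deg_single, deg_single]

/-- The coefficient characterization of `subst2`, with any sufficiently large bound. -/
lemma coeff_subst2 {F : MvPowerSeries (Fin 2) R} {a b : MvPowerSeries σ R}
    (ha : constantCoeff (σ := σ) (R := R) a = 0) (hb : constantCoeff (σ := σ) (R := R) b = 0)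
    {d : σ →₀ ℕ} {n : ℕ} (hn : deg d ≤ n) :
    MvPowerSeries.coeff (R := R) d (subst2 F a b) =
      ∑ p ∈ Finset.range (n+1) ×ˢ Finset.range (n+1),
        MvPowerSeries.coeff (R := R) (ee p) F * MvPowerSeries.coeff (R := R) d (a ^ p.1 * b ^ p.2) := by
  have base : ∀ m : ℕ, MvPowerSeries.coeff (R := R) d
      (∑ p ∈ Finset.range (m+1) ×ˢ Finset.range (m+1),
        MvPowerSeries.C (σ := σ) (R := R) (MvPowerSeries.coeff (R := R) (ee p) F) * a ^ p.1 * b ^ p.2)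
      = ∑ p ∈ Finset.range (m+1) ×ˢ Finset.range (m+1),
        MvPowerSeries.coeff (R := R) (ee p) F * MvPowerSeries.coeff (R := R) d (a ^ p.1 * b ^ p.2) := by
    intro m
    rw [map_sum]
    refine Finset.sum_congr rfl fun p _ => ?_
    rw [mul_assoc, coeff_C_mul]
  have hLHS : MvPowerSeries.coeff (R := R) d (subst2 F a b)
      = ∑ p ∈ Finset.range (deg d + 1) ×ˢ Finset.range (deg d + 1),
        MvPowerSeries.coeff (R := R) (ee p) F * MvPowerSeries.coeff (R := R) d (a ^ p.1 * b ^ p.2) := by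
    rw [MvPowerSeries.coeff_apply]
    exact base (deg d)
  rw [hLHS]
  apply Finset.sum_subset
  · exact Finset.product_subset_product (Finset.range_subset_range.mpr (by omega))
      (Finset.range_subset_range.mpr (by omega))
  · rintro ⟨i, j⟩ hmem hnot
    simp only [Finset.mem_product, Finset.mem_range] at hmem hnot
    have : deg d < i + j := by omega
    rw [coeff_pow_mul_pow_eq_zero ha hb this, mul_zero]


lemma subst2_add (F G : MvPowerSeries (Fin 2) R) {a b : MvPowerSeries σ R}
    (ha : constantCoeff (σ := σ) (R := R) a = 0) (hb : constantCoeff (σ := σ) (R := R) b = 0) :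
    subst2 (F + G) a b = subst2 F a b + subst2 G a b := by
  apply MvPowerSeries.ext; intro d
  rw [coeff_subst2 (F := F + G) ha hb (le_refl (deg d)), map_add,
    coeff_subst2 (F := F) ha hb (le_refl (deg d)),
    coeff_subst2 (F := G) ha hb (le_refl (deg d)), ← Finset.sum_add_distrib]
  exact Finset.sum_congr rfl fun p _ => by rw [map_add, add_mul]

lemma subst2_C (r : R) {a b : MvPowerSeries σ R}
    (ha : constantCoeff (σ := σ) (R := R) a = 0) (hb : constantCoeff (σ := σ) (R := R) b = 0) :
    subst2 (MvPowerSeries.C (σ := (Fin 2)) (R := R) r) a b = MvPowerSeries.C (σ := σ) (R := R) r := by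
  classical
  apply MvPowerSeries.ext; intro d
  rw [coeff_subst2 ha hb (le_refl (deg d))]
  rw [Finset.sum_eq_single (0, 0)]
  · have h0 : ee (0, 0) = 0 := by
      refine Finsupp.ext fun x => ?_
      fin_cases x
      · simpa using ee_apply0 (0,0)
      · simpa using ee_apply1 (0,0)
    rw [h0]
    simp only [pow_zero, one_mul, MvPowerSeries.coeff_C, MvPowerSeries.coeff_one]
    split_ifs with h <;> simp
  · rintro ⟨i, j⟩ _ hne
    rw [MvPowerSeries.coeff_C, if_neg, zero_mul]
    intro h
    apply hne
    have h1 : i = 0 := by have := congrArg (fun f => f 0) h; simpa [ee_apply0] using this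
    have h2 : j = 0 := by have := congrArg (fun f => f 1) h; simpa [ee_apply1] using this
    simp [h1, h2]
  · intro h; exact absurd (by simp) h

lemma subst2_one {a b : MvPowerSeries σ R}
    (ha : constantCoeff (σ := σ) (R := R) a = 0) (hb : constantCoeff (σ := σ) (R := R) b = 0) :
    subst2 1 a b = 1 := by
  have := subst2_C (R := R) 1 ha hb
  rwa [map_one, map_one] at this

lemma subst2_X0 {a b : MvPowerSeries σ R}
    (ha : constantCoeff (σ := σ) (R := R) a = 0) (hb : constantCoeff (σ := σ) (R := R) b = 0) :
    subst2 (MvPowerSeries.X 0) a b = a := by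
  classical
  apply MvPowerSeries.ext; intro d
  rw [coeff_subst2 ha hb (show deg d ≤ deg d + 1 by omega)]
  rw [Finset.sum_eq_single (1, 0)]
  · have h0 : ee (1, 0) = Finsupp.single (0 : Fin 2) 1 := by simp [ee]
    rw [h0, MvPowerSeries.coeff_X, if_pos rfl]
    simp
  · rintro ⟨i, j⟩ _ hne
    rw [MvPowerSeries.coeff_X, if_neg, zero_mul]
    intro h
    apply hne
    have h1 : i = 1 := by
      have := congrArg (fun f => f 0) h
      simpa [ee_apply0, Finsupp.single_apply] using this
    have h2 : j = 0 := by
      have := congrArg (fun f => f 1) h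
      simpa [ee_apply1, Finsupp.single_apply] using this
    simp [h1, h2]
  · intro h; exact absurd (by simp [Finset.mem_product]) h

lemma subst2_X1 {a b : MvPowerSeries σ R}
    (ha : constantCoeff (σ := σ) (R := R) a = 0) (hb : constantCoeff (σ := σ) (R := R) b = 0) :
    subst2 (MvPowerSeries.X 1) a b = b := by
  classical
  apply MvPowerSeries.ext; intro d
  rw [coeff_subst2 ha hb (show deg d ≤ deg d + 1 by omega)]
  rw [Finset.sum_eq_single (0, 1)]
  · have h0 : ee (0, 1) = Finsupp.single (1 : Fin 2) 1 := by simp [ee]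
    rw [h0, MvPowerSeries.coeff_X, if_pos rfl]
    simp
  · rintro ⟨i, j⟩ _ hne
    rw [MvPowerSeries.coeff_X, if_neg, zero_mul]
    intro h
    apply hne
    have h1 : i = 0 := by
      have := congrArg (fun f => f 0) h
      simpa [ee_apply0, Finsupp.single_apply] using this
    have h2 : j = 1 := by
      have := congrArg (fun f => f 1) h
      simpa [ee_apply1, Finsupp.single_apply] using this
    simp [h1, h2]
  · intro h; exact absurd (by simp [Finset.mem_product]) h


lemma sum_range_antidiagonal {M : Type*} [AddCommMonoid M] (n : ℕ) (k : ℕ × ℕ → M)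
    (hk : ∀ p : ℕ × ℕ, n < p.1 + p.2 → k p = 0) :
    ∑ p ∈ Finset.range (n+1), ∑ uv ∈ Finset.HasAntidiagonal.antidiagonal p, k uv
      = ∑ p ∈ Finset.range (n+1) ×ˢ Finset.range (n+1), k p := by
  classical
  rw [← Finset.sum_biUnion]
  · refine Finset.sum_subset ?_ ?_
    · intro x hx
      simp only [Finset.mem_biUnion, Finset.mem_range, Finset.HasAntidiagonal.mem_antidiagonal] at hx
      obtain ⟨m, hm, hx⟩ := hx
      simp only [Finset.mem_product, Finset.mem_range]
      omega
    · intro x hx hnx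
      apply hk
      simp only [Finset.mem_biUnion, Finset.mem_range, Finset.HasAntidiagonal.mem_antidiagonal] at hnx
      push_neg at hnx
      have := hnx (x.1 + x.2)
      omega
  · intro i _ j _ hij
    simp only [Function.onFun, Finset.disjoint_left]
    intro x hxi hxj
    rw [Finset.HasAntidiagonal.mem_antidiagonal] at hxi hxj
    exact hij (hxi ▸ hxj)

lemma shuffle {M : Type*} [AddCommMonoid M] (n : ℕ) (k : ℕ × ℕ → ℕ × ℕ → M)
    (hk : ∀ u v : ℕ × ℕ, n < u.1 + u.2 + (v.1 + v.2) → k u v = 0) :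
    ∑ p ∈ Finset.range (n+1) ×ˢ Finset.range (n+1),
      ∑ u ∈ Finset.HasAntidiagonal.antidiagonal p.1, ∑ v ∈ Finset.HasAntidiagonal.antidiagonal p.2, k u v
    = ∑ p ∈ Finset.range (n+1) ×ˢ Finset.range (n+1),
        ∑ p' ∈ Finset.range (n+1) ×ˢ Finset.range (n+1), k (p.1, p'.1) (p.2, p'.2) := by
  classical
  rw [Finset.sum_product]
  -- swap p2 and u
  have h1 : ∀ p1 : ℕ, (∑ p2 ∈ Finset.range (n+1), ∑ u ∈ Finset.HasAntidiagonal.antidiagonal p1,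
        ∑ v ∈ Finset.HasAntidiagonal.antidiagonal p2, k u v)
      = ∑ u ∈ Finset.HasAntidiagonal.antidiagonal p1, ∑ v ∈ Finset.range (n+1) ×ˢ Finset.range (n+1), k u v := by
    intro p1
    rw [Finset.sum_comm]
    refine Finset.sum_congr rfl fun u _ => ?_
    exact sum_range_antidiagonal n (fun v => k u v) (fun v hv => hk u v (by omega))
  calc ∑ p1 ∈ Finset.range (n+1), ∑ p2 ∈ Finset.range (n+1), ∑ u ∈ Finset.HasAntidiagonal.antidiagonal p1,
        ∑ v ∈ Finset.HasAntidiagonal.antidiagonal p2, k u v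
      = ∑ p1 ∈ Finset.range (n+1), ∑ u ∈ Finset.HasAntidiagonal.antidiagonal p1,
          ∑ v ∈ Finset.range (n+1) ×ˢ Finset.range (n+1), k u v := by
        exact Finset.sum_congr rfl fun p1 _ => h1 p1
    _ = ∑ u ∈ Finset.range (n+1) ×ˢ Finset.range (n+1),
          ∑ v ∈ Finset.range (n+1) ×ˢ Finset.range (n+1), k u v := by
        refine sum_range_antidiagonal n _ (fun u hu => ?_)
        exact Finset.sum_eq_zero fun v _ => hk u v (by omega)
    _ = ∑ u1 ∈ Finset.range (n+1), ∑ u2 ∈ Finset.range (n+1),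
          ∑ v ∈ Finset.range (n+1) ×ˢ Finset.range (n+1), k (u1, u2) v := by
        rw [Finset.sum_product]
    _ = ∑ u1 ∈ Finset.range (n+1), ∑ u2 ∈ Finset.range (n+1),
          ∑ v1 ∈ Finset.range (n+1), ∑ v2 ∈ Finset.range (n+1), k (u1, u2) (v1, v2) :=
        Finset.sum_congr rfl fun u1 _ => Finset.sum_congr rfl fun u2 _ => by
          rw [Finset.sum_product]
    _ = ∑ u1 ∈ Finset.range (n+1), ∑ v1 ∈ Finset.range (n+1),
          ∑ u2 ∈ Finset.range (n+1), ∑ v2 ∈ Finset.range (n+1), k (u1, u2) (v1, v2) :=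
        Finset.sum_congr rfl fun u1 _ => Finset.sum_comm
    _ = ∑ p ∈ Finset.range (n+1) ×ˢ Finset.range (n+1),
          ∑ p' ∈ Finset.range (n+1) ×ˢ Finset.range (n+1), k (p.1, p'.1) (p.2, p'.2) := by
        refine Eq.symm ?_
        rw [Finset.sum_product (f := fun p => ∑ p' ∈ Finset.range (n+1) ×ˢ Finset.range (n+1),
          k (p.1, p'.1) (p.2, p'.2))]
        refine Finset.sum_congr rfl fun p1 _ => Finset.sum_congr rfl fun p2 _ => ?_
        rw [Finset.sum_product]

lemma coeff_ee_mul (F G : MvPowerSeries (Fin 2) R) (p : ℕ × ℕ) :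
    MvPowerSeries.coeff (R := R) (ee p) (F * G)
      = ∑ u ∈ Finset.HasAntidiagonal.antidiagonal p.1, ∑ v ∈ Finset.HasAntidiagonal.antidiagonal p.2,
          MvPowerSeries.coeff (R := R) (ee (u.1, v.1)) F * MvPowerSeries.coeff (R := R) (ee (u.2, v.2)) G := by
  classical
  rw [MvPowerSeries.coeff_mul, ← Finset.sum_product']
  refine Finset.sum_nbij' (i := fun x => ((x.1 0, x.2 0), (x.1 1, x.2 1)))
    (j := fun y => (ee (y.1.1, y.2.1), ee (y.1.2, y.2.2))) ?_ ?_ ?_ ?_ ?_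
  · rintro ⟨x1, x2⟩ hx
    rw [Finset.HasAntidiagonal.mem_antidiagonal] at hx
    simp only [Finset.mem_product, Finset.HasAntidiagonal.mem_antidiagonal]
    constructor
    · have := congrArg (fun f => f 0) hx
      simpa [ee_apply0] using this
    · have := congrArg (fun f => f 1) hx
      simpa [ee_apply1] using this
  · rintro ⟨y1, y2⟩ hy
    simp only [Finset.mem_product, Finset.HasAntidiagonal.mem_antidiagonal] at hy
    rw [Finset.HasAntidiagonal.mem_antidiagonal]
    have : (ee (y1.1, y2.1)) + (ee (y1.2, y2.2)) = ee ((y1.1, y2.1) + (y1.2, y2.2)) :=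
      (ee_add _ _).symm
    rw [this]
    have h2 : ((y1.1, y2.1) + (y1.2, y2.2) : ℕ × ℕ) = (y1.1 + y1.2, y2.1 + y2.2) := rfl
    rw [h2, hy.1, hy.2]
  · rintro ⟨x1, x2⟩ _
    simp only [Prod.mk.injEq]
    exact ⟨ee_eq x1, ee_eq x2⟩
  · rintro ⟨y1, y2⟩ _
    simp only [Prod.mk.injEq]
    constructor
    · exact Prod.ext (by simp [ee_apply0]) (by simp [ee_apply0])
    · exact Prod.ext (by simp [ee_apply1]) (by simp [ee_apply1])
  · rintro ⟨x1, x2⟩ _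
    rw [ee_eq x1, ee_eq x2]

lemma subst2_mul (F G : MvPowerSeries (Fin 2) R) {a b : MvPowerSeries σ R}
    (ha : constantCoeff (σ := σ) (R := R) a = 0) (hb : constantCoeff (σ := σ) (R := R) b = 0) :
    subst2 (F * G) a b = subst2 F a b * subst2 G a b := by
  classical
  apply MvPowerSeries.ext; intro d
  set n := deg d with hn
  set sq := Finset.range (n+1) ×ˢ Finset.range (n+1) with hsq
  set c : ℕ × ℕ → R := fun p => MvPowerSeries.coeff (R := R) d (a ^ p.1 * b ^ p.2) with hc
  have hcz : ∀ p : ℕ × ℕ, n < p.1 + p.2 → c p = 0 := fun p hp =>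
    coeff_pow_mul_pow_eq_zero ha hb hp
  -- RHS computation
  have hR : MvPowerSeries.coeff (R := R) d (subst2 F a b * subst2 G a b)
      = ∑ p ∈ sq, ∑ p' ∈ sq,
          MvPowerSeries.coeff (R := R) (ee p) F * MvPowerSeries.coeff (R := R) (ee p') G *
            c (p + p') := by
    rw [MvPowerSeries.coeff_mul]
    have step : ∀ x : (σ →₀ ℕ) × (σ →₀ ℕ), x ∈ Finset.HasAntidiagonal.antidiagonal d →
        MvPowerSeries.coeff (R := R) x.1 (subst2 F a b) * MvPowerSeries.coeff (R := R) x.2 (subst2 G a b)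
        = ∑ p ∈ sq, ∑ p' ∈ sq,
            MvPowerSeries.coeff (R := R) (ee p) F * MvPowerSeries.coeff (R := R) (ee p') G *
              (MvPowerSeries.coeff (R := R) x.1 (a ^ p.1 * b ^ p.2) *
               MvPowerSeries.coeff (R := R) x.2 (a ^ p'.1 * b ^ p'.2)) := by
      intro x hx
      rw [Finset.HasAntidiagonal.mem_antidiagonal] at hx
      have hd1 : deg x.1 ≤ n := by
        have : deg x.1 + deg x.2 = n := by rw [← deg_add, hx, hn]
        omega
      have hd2 : deg x.2 ≤ n := by
        have : deg x.1 + deg x.2 = n := by rw [← deg_add, hx, hn]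
        omega
      rw [coeff_subst2 ha hb hd1, coeff_subst2 ha hb hd2, Finset.sum_mul_sum]
      exact Finset.sum_congr rfl fun p _ => Finset.sum_congr rfl fun p' _ => by ring
    rw [Finset.sum_congr rfl step, Finset.sum_comm]
    refine Finset.sum_congr rfl fun p _ => ?_
    rw [Finset.sum_comm]
    refine Finset.sum_congr rfl fun p' _ => ?_
    rw [← Finset.mul_sum, ← MvPowerSeries.coeff_mul]
    have : (a ^ p.1 * b ^ p.2) * (a ^ p'.1 * b ^ p'.2) = a ^ (p + p').1 * b ^ (p + p').2 := by
      simp only [Prod.fst_add, Prod.snd_add, pow_add]; ring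
    rw [this]
  rw [hR, coeff_subst2 ha hb (le_refl n)]
  -- LHS computation
  have hL : ∀ p : ℕ × ℕ, p ∈ sq →
      MvPowerSeries.coeff (R := R) (ee p) (F * G) * c p
      = ∑ u ∈ Finset.HasAntidiagonal.antidiagonal p.1, ∑ v ∈ Finset.HasAntidiagonal.antidiagonal p.2,
          (MvPowerSeries.coeff (R := R) (ee (u.1, v.1)) F * MvPowerSeries.coeff (R := R) (ee (u.2, v.2)) G
            * c (u.1 + u.2, v.1 + v.2)) := by
    intro p _
    rw [coeff_ee_mul, Finset.sum_mul]
    refine Finset.sum_congr rfl fun u hu => ?_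
    rw [Finset.sum_mul]
    refine Finset.sum_congr rfl fun v hv => ?_
    rw [Finset.HasAntidiagonal.mem_antidiagonal] at hu hv
    rw [hu, hv]
  rw [Finset.sum_congr rfl hL]
  rw [shuffle n (fun u v => MvPowerSeries.coeff (R := R) (ee (u.1, v.1)) F *
      MvPowerSeries.coeff (R := R) (ee (u.2, v.2)) G * c (u.1 + u.2, v.1 + v.2))
    (fun u v h => by
      rw [hcz (u.1 + u.2, v.1 + v.2) (by omega)]; ring)]
  refine Finset.sum_congr rfl fun p _ => Finset.sum_congr rfl fun p' _ => ?_
  rfl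


lemma subst2_CXX (r : R) {a b : MvPowerSeries σ R}
    (ha : constantCoeff (σ := σ) (R := R) a = 0) (hb : constantCoeff (σ := σ) (R := R) b = 0) :
    subst2 (MvPowerSeries.C (σ := (Fin 2)) (R := R) r * MvPowerSeries.X 0 * MvPowerSeries.X 1) a b
      = MvPowerSeries.C (σ := σ) (R := R) r * a * b := by
  rw [subst2_mul _ _ ha hb, subst2_mul _ _ ha hb, subst2_C _ ha hb, subst2_X0 ha hb,
    subst2_X1 ha hb]

end S2

namespace S2

variable {R : Type*} [CommRing R] {σ : Type*}

abbrev Rq : Type := Polynomial ℤ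

def Dser : MvPowerSeries (Fin 2) Rq :=
  1 + MvPowerSeries.C (σ := (Fin 2)) (R := Rq) Polynomial.X * MvPowerSeries.X 0 * MvPowerSeries.X 1

def Nser : MvPowerSeries (Fin 2) Rq :=
  MvPowerSeries.X 0 + MvPowerSeries.X 1 +
    MvPowerSeries.C (σ := (Fin 2)) (R := Rq) (1 + Polynomial.X) * MvPowerSeries.X 0 * MvPowerSeries.X 1

lemma Fchi_mul_D : Fchi * Dser = Nser := by
  rw [Fchi, Dser, Nser]
  have h : MvPowerSeries.constantCoeff (σ := (Fin 2)) (R := Rq)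
      (1 + MvPowerSeries.C (σ := (Fin 2)) (R := Rq) Polynomial.X * MvPowerSeries.X 0 * MvPowerSeries.X 1)
      = ((1 : Rqˣ) : Rq) := by
    simp [MvPowerSeries.constantCoeff_X]
  rw [mul_assoc, mul_comm (MvPowerSeries.invOfUnit _ _),
    MvPowerSeries.mul_invOfUnit _ _ h, mul_one]

/-- If `u` has constant coefficient `1`, it is a unit. -/
lemma isUnit_of_constantCoeff_one {u : MvPowerSeries σ R}
    (h : constantCoeff (σ := σ) (R := R) u = 1) : IsUnit u :=
  IsUnit.of_mul_eq_one (a := u) (MvPowerSeries.invOfUnit u 1)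
    (MvPowerSeries.mul_invOfUnit u 1 (by simpa using h))

/-- Master lemma: the division-free characterization of `subst2 Fchi a b`. -/
lemma master {σ : Type*} {a b : MvPowerSeries σ Rq}
    (ha : constantCoeff (σ := σ) (R := Rq) a = 0) (hb : constantCoeff (σ := σ) (R := Rq) b = 0) :
    subst2 Fchi a b * (1 + MvPowerSeries.C (σ := σ) (R := Rq) Polynomial.X * a * b)
      = a + b + MvPowerSeries.C (σ := σ) (R := Rq) (1 + Polynomial.X) * a * b := by
  have hD : subst2 Dser a b = 1 + MvPowerSeries.C (σ := σ) (R := Rq) Polynomial.X * a * b := by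
    rw [Dser, subst2_add _ _ ha hb, subst2_one ha hb, subst2_CXX _ ha hb]
  have hN : subst2 Nser a b = a + b + MvPowerSeries.C (σ := σ) (R := Rq) (1 + Polynomial.X) * a * b := by
    rw [Nser, subst2_add _ _ ha hb, subst2_add _ _ ha hb, subst2_X0 ha hb, subst2_X1 ha hb,
      subst2_CXX _ ha hb]
  rw [← hD, ← subst2_mul _ _ ha hb, Fchi_mul_D, hN]

end S2

open S2 in
theorem stmt4' :
    (subst2 Fchi (MvPowerSeries.X 0 : MvPowerSeries (Fin 2) (Polynomial ℤ)) 0 =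
        MvPowerSeries.X 0 ∧
      subst2 Fchi 0 (MvPowerSeries.X 1 : MvPowerSeries (Fin 2) (Polynomial ℤ)) =
        MvPowerSeries.X 1) ∧
    subst2 Fchi (MvPowerSeries.X 1 : MvPowerSeries (Fin 2) (Polynomial ℤ))
        (MvPowerSeries.X 0) = Fchi ∧
    subst2 Fchi
        (subst2 Fchi (MvPowerSeries.X 0 : MvPowerSeries (Fin 3) (Polynomial ℤ))
          (MvPowerSeries.X 1))
        (MvPowerSeries.X 2) =
      subst2 Fchi (MvPowerSeries.X 0 : MvPowerSeries (Fin 3) (Polynomial ℤ))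
        (subst2 Fchi (MvPowerSeries.X 1) (MvPowerSeries.X 2)) := by
  classical
  refine ⟨⟨?_, ?_⟩, ?_, ?_⟩
  · have h := S2.master (σ := Fin 2) (a := MvPowerSeries.X 0) (b := 0)
      (MvPowerSeries.constantCoeff_X _) (map_zero _)
    simpa using h
  · have h := S2.master (σ := Fin 2) (a := 0) (b := MvPowerSeries.X 1)
      (map_zero _) (MvPowerSeries.constantCoeff_X _)
    simpa using h
  · have h := S2.master (σ := Fin 2) (a := MvPowerSeries.X 1) (b := MvPowerSeries.X 0)
      (MvPowerSeries.constantCoeff_X _) (MvPowerSeries.constantCoeff_X _)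
    have h2 : Fchi * (1 + MvPowerSeries.C (σ := (Fin 2)) (R := S2.Rq) Polynomial.X *
        MvPowerSeries.X 1 * MvPowerSeries.X 0)
        = MvPowerSeries.X 1 + MvPowerSeries.X 0 +
          MvPowerSeries.C (σ := (Fin 2)) (R := S2.Rq) (1 + Polynomial.X) * MvPowerSeries.X 1 *
            MvPowerSeries.X 0 := by
      have h3 := S2.Fchi_mul_D
      rw [S2.Dser, S2.Nser] at h3
      calc Fchi * (1 + MvPowerSeries.C (σ := (Fin 2)) (R := S2.Rq) Polynomial.X *
            MvPowerSeries.X 1 * MvPowerSeries.X 0)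
          = Fchi * (1 + MvPowerSeries.C (σ := (Fin 2)) (R := S2.Rq) Polynomial.X *
            MvPowerSeries.X 0 * MvPowerSeries.X 1) := by ring
        _ = MvPowerSeries.X 0 + MvPowerSeries.X 1 +
            MvPowerSeries.C (σ := (Fin 2)) (R := S2.Rq) (1 + Polynomial.X) * MvPowerSeries.X 0 *
              MvPowerSeries.X 1 := h3
        _ = _ := by ring
    have hu : IsUnit (1 + MvPowerSeries.C (σ := (Fin 2)) (R := S2.Rq) Polynomial.X *
        MvPowerSeries.X 1 * MvPowerSeries.X 0) :=
      S2.isUnit_of_constantCoeff_one (by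
        simp [MvPowerSeries.constantCoeff_X])
    exact hu.mul_right_cancel (h.trans h2.symm)
  · -- associativity
    set q : Polynomial ℤ := Polynomial.X with hq
    set X0 : MvPowerSeries (Fin 3) S2.Rq := MvPowerSeries.X 0 with hX0
    set X1 : MvPowerSeries (Fin 3) S2.Rq := MvPowerSeries.X 1 with hX1
    set X2 : MvPowerSeries (Fin 3) S2.Rq := MvPowerSeries.X 2 with hX2
    have hx0 : MvPowerSeries.constantCoeff (σ := (Fin 3)) (R := S2.Rq) X0 = 0 :=
      MvPowerSeries.constantCoeff_X _
    have hx1 : MvPowerSeries.constantCoeff (σ := (Fin 3)) (R := S2.Rq) X1 = 0 :=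
      MvPowerSeries.constantCoeff_X _
    have hx2 : MvPowerSeries.constantCoeff (σ := (Fin 3)) (R := S2.Rq) X2 = 0 :=
      MvPowerSeries.constantCoeff_X _
    set C3 : Polynomial ℤ →+* MvPowerSeries (Fin 3) S2.Rq := MvPowerSeries.C (σ := (Fin 3)) (R := S2.Rq) with hC3
    set A : MvPowerSeries (Fin 3) S2.Rq := subst2 Fchi X0 X1 with hA
    set B : MvPowerSeries (Fin 3) S2.Rq := subst2 Fchi X1 X2 with hB
    have hE2 : A * (1 + C3 q * X0 * X1) = X0 + X1 + C3 (1 + q) * X0 * X1 :=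
      S2.master hx0 hx1
    have hE4 : B * (1 + C3 q * X1 * X2) = X1 + X2 + C3 (1 + q) * X1 * X2 :=
      S2.master hx1 hx2
    have hA0 : MvPowerSeries.constantCoeff (σ := (Fin 3)) (R := S2.Rq) A = 0 := by
      have h := congrArg (MvPowerSeries.constantCoeff (σ := (Fin 3)) (R := S2.Rq)) hE2
      simp only [map_add, map_mul, map_one, hx0, hx1, mul_zero, zero_mul, add_zero,
        mul_one] at h
      exact h
    have hB0 : MvPowerSeries.constantCoeff (σ := (Fin 3)) (R := S2.Rq) B = 0 := by
      have h := congrArg (MvPowerSeries.constantCoeff (σ := (Fin 3)) (R := S2.Rq)) hE4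
      simp only [map_add, map_mul, map_one, hx1, hx2, mul_zero, zero_mul, add_zero,
        mul_one] at h
      exact h
    have hE1 : subst2 Fchi A X2 * (1 + C3 q * A * X2) = A + X2 + C3 (1 + q) * A * X2 :=
      S2.master hA0 hx2
    have hE3 : subst2 Fchi X0 B * (1 + C3 q * X0 * B) = X0 + B + C3 (1 + q) * X0 * B :=
      S2.master hx0 hB0
    set N01 : MvPowerSeries (Fin 3) S2.Rq := X0 + X1 + C3 (1 + q) * X0 * X1 with hN01
    set D01 : MvPowerSeries (Fin 3) S2.Rq := 1 + C3 q * X0 * X1 with hD01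
    set N12 : MvPowerSeries (Fin 3) S2.Rq := X1 + X2 + C3 (1 + q) * X1 * X2 with hN12
    set D12 : MvPowerSeries (Fin 3) S2.Rq := 1 + C3 q * X1 * X2 with hD12
    set Q : MvPowerSeries (Fin 3) S2.Rq := D01 + C3 q * X2 * N01 with hQdef
    set Q' : MvPowerSeries (Fin 3) S2.Rq := D12 + C3 q * X0 * N12 with hQ'def
    set P : MvPowerSeries (Fin 3) S2.Rq := N01 + X2 * D01 + C3 (1 + q) * X2 * N01 with hPdef
    set P' : MvPowerSeries (Fin 3) S2.Rq := N12 + X0 * D12 + C3 (1 + q) * X0 * N12 with hP'def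
    have hLQ : subst2 Fchi A X2 * Q = P := by
      have hQ : (1 + C3 q * A * X2) * D01 = Q := by
        have h : (1 + C3 q * A * X2) * D01 = D01 + C3 q * X2 * (A * D01) := by ring
        rw [h, hE2]
      calc subst2 Fchi A X2 * Q
          = subst2 Fchi A X2 * (1 + C3 q * A * X2) * D01 := by rw [← hQ]; ring
        _ = (A + X2 + C3 (1 + q) * A * X2) * D01 := by rw [hE1]
        _ = A * D01 + X2 * D01 + C3 (1 + q) * X2 * (A * D01) := by ring
        _ = P := by rw [hE2]
    have hRQ : subst2 Fchi X0 B * Q' = P' := by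
      have hQ : (1 + C3 q * X0 * B) * D12 = Q' := by
        have h : (1 + C3 q * X0 * B) * D12 = D12 + C3 q * X0 * (B * D12) := by ring
        rw [h, hE4]
      calc subst2 Fchi X0 B * Q'
          = subst2 Fchi X0 B * (1 + C3 q * X0 * B) * D12 := by rw [← hQ]; ring
        _ = (X0 + B + C3 (1 + q) * X0 * B) * D12 := by rw [hE3]
        _ = X0 * D12 + (B * D12) + C3 (1 + q) * X0 * (B * D12) := by ring
        _ = X0 * D12 + N12 + C3 (1 + q) * X0 * N12 := by rw [hE4]
        _ = P' := by rw [hP'def]; ring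
    have hPQ : P * Q' = P' * Q := by
      rw [hPdef, hP'def, hQdef, hQ'def, hN01, hD01, hN12, hD12]
      ring
    have huQ : IsUnit Q := S2.isUnit_of_constantCoeff_one (by
      rw [hQdef, hD01, hN01, hX0, hX1, hX2]
      simp [MvPowerSeries.constantCoeff_X])
    have huQ' : IsUnit Q' := S2.isUnit_of_constantCoeff_one (by
      rw [hQ'def, hD12, hN12, hX0, hX1, hX2]
      simp [MvPowerSeries.constantCoeff_X])
    have hfin : subst2 Fchi A X2 * (Q * Q') = subst2 Fchi X0 B * (Q * Q') := by
      calc subst2 Fchi A X2 * (Q * Q') = subst2 Fchi A X2 * Q * Q' := by ring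
        _ = P * Q' := by rw [hLQ]
        _ = P' * Q := hPQ
        _ = subst2 Fchi X0 B * Q' * Q := by rw [hRQ]
        _ = subst2 Fchi X0 B * (Q * Q') := by ring
    exact (huQ.mul huQ').mul_right_cancel hfin

/-- **Proposition 2.3 of the paper.** `F_χ` is a commutative one-dimensional
formal group law over `ℤ[q]`:
(i) `F_χ(X, 0) = X` and `F_χ(0, Y) = Y`;
(ii) `F_χ(X, Y) = F_χ(Y, X)`;
(iii) `F_χ(F_χ(X,Y), Z) = F_χ(X, F_χ(Y,Z))` in `ℤ[q]⟦X,Y,Z⟧`. -/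
theorem stmt4 :
    (subst2 Fchi (MvPowerSeries.X 0 : MvPowerSeries (Fin 2) (Polynomial ℤ)) 0 =
        MvPowerSeries.X 0 ∧
      subst2 Fchi 0 (MvPowerSeries.X 1 : MvPowerSeries (Fin 2) (Polynomial ℤ)) =
        MvPowerSeries.X 1) ∧
    subst2 Fchi (MvPowerSeries.X 1 : MvPowerSeries (Fin 2) (Polynomial ℤ))
        (MvPowerSeries.X 0) = Fchi ∧
    subst2 Fchi
        (subst2 Fchi (MvPowerSeries.X 0 : MvPowerSeries (Fin 3) (Polynomial ℤ))
          (MvPowerSeries.X 1))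
        (MvPowerSeries.X 2) =
      subst2 Fchi (MvPowerSeries.X 0 : MvPowerSeries (Fin 3) (Polynomial ℤ))
        (subst2 Fchi (MvPowerSeries.X 1) (MvPowerSeries.X 2)) := by
  classical
  refine ⟨⟨?_, ?_⟩, ?_, ?_⟩
  · have h := S2.master (σ := Fin 2) (a := MvPowerSeries.X 0) (b := 0)
      (MvPowerSeries.constantCoeff_X _) (map_zero _)
    simpa using h
  · have h := S2.master (σ := Fin 2) (a := 0) (b := MvPowerSeries.X 1)
      (map_zero _) (MvPowerSeries.constantCoeff_X _)
    simpa using h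
  · have h := S2.master (σ := Fin 2) (a := MvPowerSeries.X 1) (b := MvPowerSeries.X 0)
      (MvPowerSeries.constantCoeff_X _) (MvPowerSeries.constantCoeff_X _)
    have h2 : Fchi * (1 + MvPowerSeries.C (σ := (Fin 2)) (R := S2.Rq) Polynomial.X *
        MvPowerSeries.X 1 * MvPowerSeries.X 0)
        = MvPowerSeries.X 1 + MvPowerSeries.X 0 +
          MvPowerSeries.C (σ := (Fin 2)) (R := S2.Rq) (1 + Polynomial.X) * MvPowerSeries.X 1 *
            MvPowerSeries.X 0 := by
      have h3 := S2.Fchi_mul_D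
      rw [S2.Dser, S2.Nser] at h3
      calc Fchi * (1 + MvPowerSeries.C (σ := (Fin 2)) (R := S2.Rq) Polynomial.X *
            MvPowerSeries.X 1 * MvPowerSeries.X 0)
          = Fchi * (1 + MvPowerSeries.C (σ := (Fin 2)) (R := S2.Rq) Polynomial.X *
            MvPowerSeries.X 0 * MvPowerSeries.X 1) := by ring
        _ = MvPowerSeries.X 0 + MvPowerSeries.X 1 +
            MvPowerSeries.C (σ := (Fin 2)) (R := S2.Rq) (1 + Polynomial.X) * MvPowerSeries.X 0 *
              MvPowerSeries.X 1 := h3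
        _ = _ := by ring
    have hu : IsUnit (1 + MvPowerSeries.C (σ := (Fin 2)) (R := S2.Rq) Polynomial.X *
        MvPowerSeries.X 1 * MvPowerSeries.X 0) :=
      S2.isUnit_of_constantCoeff_one (by
        simp [MvPowerSeries.constantCoeff_X])
    exact hu.mul_right_cancel (h.trans h2.symm)
  · -- associativity
    set q : Polynomial ℤ := Polynomial.X with hq
    set X0 : MvPowerSeries (Fin 3) S2.Rq := MvPowerSeries.X 0 with hX0
    set X1 : MvPowerSeries (Fin 3) S2.Rq := MvPowerSeries.X 1 with hX1
    set X2 : MvPowerSeries (Fin 3) S2.Rq := MvPowerSeries.X 2 with hX2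
    have hx0 : MvPowerSeries.constantCoeff (σ := (Fin 3)) (R := S2.Rq) X0 = 0 :=
      MvPowerSeries.constantCoeff_X _
    have hx1 : MvPowerSeries.constantCoeff (σ := (Fin 3)) (R := S2.Rq) X1 = 0 :=
      MvPowerSeries.constantCoeff_X _
    have hx2 : MvPowerSeries.constantCoeff (σ := (Fin 3)) (R := S2.Rq) X2 = 0 :=
      MvPowerSeries.constantCoeff_X _
    set C3 : Polynomial ℤ →+* MvPowerSeries (Fin 3) S2.Rq := MvPowerSeries.C (σ := (Fin 3)) (R := S2.Rq) with hC3
    set A : MvPowerSeries (Fin 3) S2.Rq := subst2 Fchi X0 X1 with hA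
    set B : MvPowerSeries (Fin 3) S2.Rq := subst2 Fchi X1 X2 with hB
    have hE2 : A * (1 + C3 q * X0 * X1) = X0 + X1 + C3 (1 + q) * X0 * X1 :=
      S2.master hx0 hx1
    have hE4 : B * (1 + C3 q * X1 * X2) = X1 + X2 + C3 (1 + q) * X1 * X2 :=
      S2.master hx1 hx2
    have hA0 : MvPowerSeries.constantCoeff (σ := (Fin 3)) (R := S2.Rq) A = 0 := by
      have h := congrArg (MvPowerSeries.constantCoeff (σ := (Fin 3)) (R := S2.Rq)) hE2
      simp only [map_add, map_mul, map_one, hx0, hx1, mul_zero, zero_mul, add_zero,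
        mul_one] at h
      exact h
    have hB0 : MvPowerSeries.constantCoeff (σ := (Fin 3)) (R := S2.Rq) B = 0 := by
      have h := congrArg (MvPowerSeries.constantCoeff (σ := (Fin 3)) (R := S2.Rq)) hE4
      simp only [map_add, map_mul, map_one, hx1, hx2, mul_zero, zero_mul, add_zero,
        mul_one] at h
      exact h
    have hE1 : subst2 Fchi A X2 * (1 + C3 q * A * X2) = A + X2 + C3 (1 + q) * A * X2 :=
      S2.master hA0 hx2
    have hE3 : subst2 Fchi X0 B * (1 + C3 q * X0 * B) = X0 + B + C3 (1 + q) * X0 * B :=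
      S2.master hx0 hB0
    set N01 : MvPowerSeries (Fin 3) S2.Rq := X0 + X1 + C3 (1 + q) * X0 * X1 with hN01
    set D01 : MvPowerSeries (Fin 3) S2.Rq := 1 + C3 q * X0 * X1 with hD01
    set N12 : MvPowerSeries (Fin 3) S2.Rq := X1 + X2 + C3 (1 + q) * X1 * X2 with hN12
    set D12 : MvPowerSeries (Fin 3) S2.Rq := 1 + C3 q * X1 * X2 with hD12
    set Q : MvPowerSeries (Fin 3) S2.Rq := D01 + C3 q * X2 * N01 with hQdef
    set Q' : MvPowerSeries (Fin 3) S2.Rq := D12 + C3 q * X0 * N12 with hQ'def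
    set P : MvPowerSeries (Fin 3) S2.Rq := N01 + X2 * D01 + C3 (1 + q) * X2 * N01 with hPdef
    set P' : MvPowerSeries (Fin 3) S2.Rq := N12 + X0 * D12 + C3 (1 + q) * X0 * N12 with hP'def
    have hLQ : subst2 Fchi A X2 * Q = P := by
      have hQ : (1 + C3 q * A * X2) * D01 = Q := by
        have h : (1 + C3 q * A * X2) * D01 = D01 + C3 q * X2 * (A * D01) := by ring
        rw [h, hE2]
      calc subst2 Fchi A X2 * Q
          = subst2 Fchi A X2 * (1 + C3 q * A * X2) * D01 := by rw [← hQ]; ring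
        _ = (A + X2 + C3 (1 + q) * A * X2) * D01 := by rw [hE1]
        _ = A * D01 + X2 * D01 + C3 (1 + q) * X2 * (A * D01) := by ring
        _ = P := by rw [hE2]
    have hRQ : subst2 Fchi X0 B * Q' = P' := by
      have hQ : (1 + C3 q * X0 * B) * D12 = Q' := by
        have h : (1 + C3 q * X0 * B) * D12 = D12 + C3 q * X0 * (B * D12) := by ring
        rw [h, hE4]
      calc subst2 Fchi X0 B * Q'
          = subst2 Fchi X0 B * (1 + C3 q * X0 * B) * D12 := by rw [← hQ]; ring
        _ = (X0 + B + C3 (1 + q) * X0 * B) * D12 := by rw [hE3]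
        _ = X0 * D12 + (B * D12) + C3 (1 + q) * X0 * (B * D12) := by ring
        _ = X0 * D12 + N12 + C3 (1 + q) * X0 * N12 := by rw [hE4]
        _ = P' := by rw [hP'def]; ring
    have hPQ : P * Q' = P' * Q := by
      rw [hPdef, hP'def, hQdef, hQ'def, hN01, hD01, hN12, hD12]
      ring
    have huQ : IsUnit Q := S2.isUnit_of_constantCoeff_one (by
      rw [hQdef, hD01, hN01, hX0, hX1, hX2]
      simp [MvPowerSeries.constantCoeff_X])
    have huQ' : IsUnit Q' := S2.isUnit_of_constantCoeff_one (by
      rw [hQ'def, hD12, hN12, hX0, hX1, hX2]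
      simp [MvPowerSeries.constantCoeff_X])
    have hfin : subst2 Fchi A X2 * (Q * Q') = subst2 Fchi X0 B * (Q * Q') := by
      calc subst2 Fchi A X2 * (Q * Q') = subst2 Fchi A X2 * Q * Q' := by ring
        _ = P * Q' := by rw [hLQ]
        _ = P' * Q := hPQ
        _ = subst2 Fchi X0 B * Q' * Q := by rw [hRQ]
        _ = subst2 Fchi X0 B * (Q * Q') := by ring
    exact (huQ.mul huQ').mul_right_cancel hfin

end
end

section
/- Let K be a field and q, x, y, z ∈ K. Define f(a,b) = (a + b + (1+q)·a·b)/(1 + q·a·b) whenever 1 + q·a·b ≠ 0. Assume 1 + q·x·y ≠ 0, 1 + q·y·z ≠ 0, 1 + q·f(x,y)·z ≠ 0, and 1 + q·x·f(y,z) ≠ 0. Then f(f(x,y), z) = f(x, f(y,z)). -/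
/-- The rational operation `f(a,b) = (a + b + (1+q)ab)/(1 + qab)` (the group
law `F_χ` evaluated at field elements) is associative wherever all the
denominators involved are nonzero. -/
theorem stmt5 {K : Type*} [Field K] (q x y z : K)
    (f : K → K → K) (hf : ∀ a b, f a b = (a + b + (1 + q) * a * b) / (1 + q * a * b))
    (h1 : 1 + q * x * y ≠ 0) (h2 : 1 + q * y * z ≠ 0)
    (h3 : 1 + q * f x y * z ≠ 0) (h4 : 1 + q * x * f y z ≠ 0) :
    f (f x y) z = f x (f y z) := by
  have h3' : (1 + q * x * y) + q * (x + y + (1 + q) * x * y) * z ≠ 0 := by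
    have := mul_ne_zero h1 h3
    rw [hf] at this
    intro h
    apply this
    field_simp
    linear_combination h
  have h4' : (1 + q * y * z) + q * x * (y + z + (1 + q) * y * z) ≠ 0 := by
    have := mul_ne_zero h2 h4
    rw [hf] at this
    intro h
    apply this
    field_simp
    linear_combination h
  rw [hf (f x y) z, hf x (f y z), hf x y, hf y z]
  rw [div_eq_div_iff]
  · have e1 : 1 + x * y * q ≠ 0 := by convert h1 using 1; ring
    have e2 : 1 + y * q * z ≠ 0 := by convert h2 using 1; ring
    field_simp
    ring
  · intro h
    apply h3'
    field_simp at h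
    linear_combination h
  · intro h
    apply h4'
    field_simp at h
    linear_combination h
end
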